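/- Suppose φ₁ satisfies t - φ₁(t) ~ (1-c)·t/ln t as t → ∞ with 0 < c < 1, and fix n ∈ ℕ and ε > 0. Then for all sufficiently large T, φ₁^(n+1)(T) > (1 - ε)·T. -/

import Mathlib

open Filter

/-- if `t - φ₁ t ~ (1-c) t / ln t` then for every fixed `n` and
`ε > 0`, eventually `φ₁^[n+1] T > (1 - ε) T`. -/
theorem iterate_lower_bound
    (φ₁ : ℝ → ℝ) (c : ℝ) (hc : 0 < c) (hc1 : c < 1) (n : ℕ) (ε : ℝ) (hε : 0 < ε)
    (hincr : ∀ᶠ t in atTop, ∀ s, t ≤ s → φ₁ t ≤ φ₁ s)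
    (hlt : ∀ᶠ t in atTop, φ₁ t < t)
    (hiter : ∀ k : ℕ, Tendsto (fun t => φ₁^[k] t) atTop atTop)
    (hasymp : Tendsto (fun t => (t - φ₁ t) / ((1 - c) * t / Real.log t))
      atTop (nhds 1)) :
    ∀ᶠ T in atTop, (1 - ε) * T < φ₁^[n + 1] T := by
  have hc1' : (1 : ℝ) - c ≠ 0 := by linarith
  -- Step 1: (t - φ₁ t)/t → 0
  have h0 : Tendsto (fun t => (t - φ₁ t) / t) atTop (nhds 0) := by
    have hlog : Tendsto (fun t : ℝ => (1 - c) / Real.log t) atTop (nhds 0) :=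
      Tendsto.div_atTop tendsto_const_nhds Real.tendsto_log_atTop
    have hmul := hasymp.mul hlog
    rw [one_mul] at hmul
    refine hmul.congr' ?_
    filter_upwards [eventually_gt_atTop (1 : ℝ)] with t ht
    have ht0 : t ≠ 0 := by linarith
    have hlt0 : Real.log t ≠ 0 := ne_of_gt (Real.log_pos ht)
    field_simp
  -- Step 2: φ₁ t / t → 1
  have h1 : Tendsto (fun t => φ₁ t / t) atTop (nhds 1) := by
    have := (tendsto_const_nhds (x := (1:ℝ)) (f := atTop)).sub h0
    rw [sub_zero] at this
    refine this.congr' ?_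
    filter_upwards [eventually_ne_atTop (0 : ℝ)] with t ht
    field_simp
    ring
  -- Step 3: by induction, φ₁^[k+1] t / t → 1
  have hk : ∀ k : ℕ, Tendsto (fun t => φ₁^[k + 1] t / t) atTop (nhds 1) := by
    intro k
    induction k with
    | zero => simpa using h1
    | succ k ih =>
      have hcomp : Tendsto (fun t => φ₁ (φ₁^[k + 1] t) / φ₁^[k + 1] t) atTop (nhds 1) :=
        h1.comp (hiter (k + 1))
      have := hcomp.mul ih
      rw [one_mul] at this
      refine this.congr' ?_
      filter_upwards [(hiter (k + 1)).eventually (eventually_ne_atTop (0 : ℝ))] with t ht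
      rw [Function.iterate_succ_apply' φ₁ (k+1) t]
      exact div_mul_div_cancel₀ ht
  -- Step 4: conclude
  have hε' : (1 : ℝ) - ε < 1 := by linarith
  filter_upwards [(hk n).eventually (eventually_gt_nhds hε'), eventually_gt_atTop (0 : ℝ)]
    with T hT hT0
  calc (1 - ε) * T < (φ₁^[n + 1] T / T) * T := by
        exact mul_lt_mul_of_pos_right hT hT0
    _ = φ₁^[n + 1] T := by field_simp
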